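/- Let X and Y be independent random variables, each uniformly distributed on a 3-element alphabet, let Z = 1 if X = Y and Z = 0 otherwise, and set U = (X, Z), V = (Y, Z). Then for every finite-valued random variable Q on the same probability space with I(U ; V | Q) = 0, it holds that H(U | Q) + H(V | Q) ≤ (2/3) · log 2. -/

import Mathlib

open MeasureTheory ProbabilityTheory Real
open scoped ENNReal

/-- The probability that the random variable `X` takes the value `x`. -/
noncomputable def pm {Ω S : Type*} [MeasurableSpace Ω] (μ : Measure Ω) (X : Ω → S) (x : S) : ℝ :=
  (μ (X ⁻¹' {x})).toReal

/-- Shannon entropy (with natural logarithm) of a finite-valued random variable. -/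
noncomputable def entH {Ω S : Type*} [MeasurableSpace Ω] [Fintype S]
    (μ : Measure Ω) (X : Ω → S) : ℝ :=
  ∑ x : S, Real.negMulLog (pm μ X x)

/-- Conditional entropy `H(X | Y)`. -/
noncomputable def condEnt {Ω S T : Type*} [MeasurableSpace Ω] [Fintype S] [Fintype T]
    (μ : Measure Ω) (X : Ω → S) (Y : Ω → T) : ℝ :=
  entH μ (fun ω => (X ω, Y ω)) - entH μ Y

/-- Mutual information `I(X ; Y)`. -/
noncomputable def mutInf {Ω S T : Type*} [MeasurableSpace Ω] [Fintype S] [Fintype T]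
    (μ : Measure Ω) (X : Ω → S) (Y : Ω → T) : ℝ :=
  entH μ X + entH μ Y - entH μ (fun ω => (X ω, Y ω))

/-- Conditional mutual information `I(X ; Y | Z)`. -/
noncomputable def condMutInf {Ω S T U : Type*} [MeasurableSpace Ω] [Fintype S] [Fintype T]
    [Fintype U] (μ : Measure Ω) (X : Ω → S) (Y : Ω → T) (Z : Ω → U) : ℝ :=
  entH μ (fun ω => (X ω, Z ω)) + entH μ (fun ω => (Y ω, Z ω))
    - entH μ (fun ω => ((X ω, Y ω), Z ω)) - entH μ Z

set_option linter.unusedSectionVars false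
set_option maxHeartbeats 1000000

namespace TernaryEQHelper
open Finset

lemma gibbs_term {r s : ℝ} (hr : 0 ≤ r) (hs : 0 ≤ s) (hdom : r ≠ 0 → s ≠ 0) :
    r * Real.log s - r * Real.log r ≤ s - r := by
  rcases eq_or_lt_of_le hr with h | h
  · simp [← h, hs]
  · have hs' : 0 < s := lt_of_le_of_ne hs (Ne.symm (hdom h.ne'))
    have h1 : Real.log (s / r) ≤ s / r - 1 := Real.log_le_sub_one_of_pos (by positivity)
    have h2 : Real.log (s / r) = Real.log s - Real.log r := Real.log_div hs'.ne' h.ne'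
    have := mul_le_mul_of_nonneg_left h1 hr
    rw [h2] at this
    calc r * Real.log s - r * Real.log r = r * (Real.log s - Real.log r) := by ring
    _ ≤ r * (s / r - 1) := this
    _ = s - r := by field_simp

lemma gibbs_term_eq {r s : ℝ} (hr : 0 ≤ r) (hs : 0 ≤ s) (hdom : r ≠ 0 → s ≠ 0)
    (heq : r * Real.log s - r * Real.log r = s - r) : r = s := by
  rcases eq_or_lt_of_le hr with h | h
  · rw [← h] at heq ⊢; simpa using heq
  · have hs' : 0 < s := lt_of_le_of_ne hs (Ne.symm (hdom h.ne'))
    by_contra hne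
    have hne' : s / r ≠ 1 := by
      intro hc; exact hne (by field_simp at hc; linarith)
    have h1 : Real.log (s / r) < s / r - 1 := Real.log_lt_sub_one_of_pos (by positivity) hne'
    have h2 : Real.log (s / r) = Real.log s - Real.log r := Real.log_div hs'.ne' h.ne'
    rw [h2] at h1
    have := mul_lt_mul_of_pos_left h1 h
    rw [mul_sub, mul_sub, mul_div_cancel₀ _ h.ne', mul_one] at this
    linarith

lemma gibbs_sum {ι : Type*} [Fintype ι] (r s : ι → ℝ) (hr : ∀ i, 0 ≤ r i) (hs : ∀ i, 0 ≤ s i)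
    (hdom : ∀ i, r i ≠ 0 → s i ≠ 0) :
    ∑ i, (r i * Real.log (s i) - r i * Real.log (r i)) ≤ ∑ i, s i - ∑ i, r i := by
  rw [← Finset.sum_sub_distrib]
  exact Finset.sum_le_sum fun i _ => gibbs_term (hr i) (hs i) (hdom i)

lemma gibbs_sum_eq {ι : Type*} [Fintype ι] (r s : ι → ℝ) (hr : ∀ i, 0 ≤ r i) (hs : ∀ i, 0 ≤ s i)
    (hdom : ∀ i, r i ≠ 0 → s i ≠ 0)
    (heq : ∑ i, (r i * Real.log (s i) - r i * Real.log (r i)) = ∑ i, s i - ∑ i, r i) :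
    ∀ i, r i = s i := by
  intro i
  apply gibbs_term_eq (hr i) (hs i) (hdom i)
  have h0 : ∑ j : ι, ((s j - r j) - (r j * Real.log (s j) - r j * Real.log (r j))) = 0 := by
    rw [Finset.sum_sub_distrib, Finset.sum_sub_distrib]; linarith
  have h1 := (Finset.sum_eq_zero_iff_of_nonneg (fun j _ => by
    have := gibbs_term (hr j) (hs j) (hdom j); linarith)).mp h0 i (Finset.mem_univ i)
  linarith


lemma entropy_le_mass_mul_log {ι : Type*} [Fintype ι] [DecidableEq ι] (r : ι → ℝ)
    (hr : ∀ i, 0 ≤ r i) (m : ℕ)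
    (hcard : (Finset.univ.filter (fun i => r i ≠ 0)).card ≤ m) :
    ∑ i, Real.negMulLog (r i) - Real.negMulLog (∑ i, r i) ≤ (∑ i, r i) * Real.log m := by
  rcases eq_or_lt_of_le (Finset.sum_nonneg fun i (_ : i ∈ univ) => hr i) with h0 | h0
  · have hz : ∀ i, r i = 0 := fun i =>
      (Finset.sum_eq_zero_iff_of_nonneg (fun j _ => hr j)).mp h0.symm i (Finset.mem_univ i)
    simp [hz]
  · set k := (Finset.univ.filter (fun i => r i ≠ 0)).card with hk
    have hkpos : 0 < k := by
      rcases Finset.exists_ne_zero_of_sum_ne_zero h0.ne' with ⟨i, _, hi⟩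
      exact Finset.card_pos.mpr ⟨i, by simp [hi]⟩
    have hkR : (0:ℝ) < (k:ℝ) := by exact_mod_cast hkpos
    set S := ∑ i, r i with hS
    set s : ι → ℝ := fun i => if r i ≠ 0 then S / k else 0 with hsdef
    have hs : ∀ i, 0 ≤ s i := fun i => by
      simp only [hsdef]; split
      · positivity
      · exact le_refl 0
    have hdom : ∀ i, r i ≠ 0 → s i ≠ 0 := fun i hi => by
      simp only [hsdef, if_pos hi]; positivity
    have hssum : ∑ i, s i = S := by
      simp only [hsdef]
      rw [Finset.sum_ite, Finset.sum_const, Finset.sum_const, ← hk]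
      simp [nsmul_eq_mul]
      field_simp
    have hlogs : ∑ i, r i * Real.log (s i) = S * (Real.log S - Real.log k) := by
      have : ∀ i, r i * Real.log (s i) = r i * (Real.log S - Real.log k) := by
        intro i
        rcases eq_or_ne (r i) 0 with h | h
        · simp [h]
        · simp only [hsdef, if_pos h]
          rw [Real.log_div h0.ne' hkR.ne']
      rw [Finset.sum_congr rfl fun i _ => this i, ← Finset.sum_mul, ← hS]
    have hgibbs := gibbs_sum r s hr hs hdom
    rw [Finset.sum_sub_distrib, hlogs, hssum, ← hS] at hgibbs
    have hlogkm : Real.log k ≤ Real.log m := by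
      apply Real.log_le_log hkR
      exact_mod_cast hcard
    have e1 : ∑ i, Real.negMulLog (r i) = -∑ i, r i * Real.log (r i) := by
      simp [Real.negMulLog, Finset.sum_neg_distrib]
    have e2 : Real.negMulLog S = -(S * Real.log S) := by simp [Real.negMulLog]
    rw [e1, e2]
    nlinarith [mul_le_mul_of_nonneg_left hlogkm h0.le]

variable {A : Type*} [Fintype A] [DecidableEq A]

def eqz (x y : A) : Fin 2 := if x = y then 1 else 0

noncomputable def rU (c : A → A → ℝ) (u : A × Fin 2) : ℝ :=
  ∑ x, ∑ y, if (x, eqz x y) = u then c x y else 0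

noncomputable def rV (c : A → A → ℝ) (v : A × Fin 2) : ℝ :=
  ∑ x, ∑ y, if (y, eqz x y) = v then c x y else 0

noncomputable def rW (c : A → A → ℝ) (uv : (A × Fin 2) × (A × Fin 2)) : ℝ :=
  ∑ x, ∑ y, if ((x, eqz x y), (y, eqz x y)) = uv then c x y else 0

noncomputable def wM (c : A → A → ℝ) : ℝ := ∑ x, ∑ y, c x y

variable (c : A → A → ℝ)

lemma rU_nonneg (hc : ∀ x y, 0 ≤ c x y) (u) : 0 ≤ rU c u :=
  Finset.sum_nonneg fun x _ => Finset.sum_nonneg fun y _ => by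
    split <;> [exact hc x y; exact le_refl 0]

lemma rV_nonneg (hc : ∀ x y, 0 ≤ c x y) (v) : 0 ≤ rV c v :=
  Finset.sum_nonneg fun x _ => Finset.sum_nonneg fun y _ => by
    split <;> [exact hc x y; exact le_refl 0]

lemma rW_nonneg (hc : ∀ x y, 0 ≤ c x y) (uv) : 0 ≤ rW c uv :=
  Finset.sum_nonneg fun x _ => Finset.sum_nonneg fun y _ => by
    split <;> [exact hc x y; exact le_refl 0]

lemma sum_rU : ∑ u, rU c u = wM c := by
  unfold rU wM
  rw [Finset.sum_comm]
  refine Finset.sum_congr rfl fun x _ => ?_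
  rw [Finset.sum_comm]
  refine Finset.sum_congr rfl fun y _ => ?_
  simp

lemma sum_rV' : ∑ v, rV c v = wM c := by
  unfold rV wM
  rw [Finset.sum_comm]
  refine Finset.sum_congr rfl fun x _ => ?_
  rw [Finset.sum_comm]
  refine Finset.sum_congr rfl fun y _ => ?_
  simp

lemma sum_rW_left (u) : ∑ v, rW c (u, v) = rU c u := by
  unfold rW rU
  rw [Finset.sum_comm]
  refine Finset.sum_congr rfl fun x _ => ?_
  rw [Finset.sum_comm]
  refine Finset.sum_congr rfl fun y _ => ?_
  simp [Prod.mk.injEq, ite_and]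
lemma sum_rW_right (v) : ∑ u, rW c (u, v) = rV c v := by
  unfold rW rV
  rw [Finset.sum_comm]
  refine Finset.sum_congr rfl fun x _ => ?_
  rw [Finset.sum_comm]
  refine Finset.sum_congr rfl fun y _ => ?_
  simp [Prod.mk.injEq, ite_and]
lemma sum_rW : ∑ uv, rW c uv = wM c := by
  rw [Fintype.sum_prod_type]
  calc ∑ u, ∑ v, rW c (u, v) = ∑ u, rU c u := by
        exact Finset.sum_congr rfl fun u _ => sum_rW_left c u
  _ = wM c := sum_rU c





@[simp] lemma eqz_eq_one {x y : A} : eqz x y = 1 ↔ x = y := by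
  unfold eqz; split <;> simp_all
@[simp] lemma eqz_eq_zero {x y : A} : eqz x y = 0 ↔ x ≠ y := by
  unfold eqz; split <;> simp_all


lemma rU_one (x : A) : rU c (x, 1) = c x x := by
  unfold rU
  rw [Finset.sum_eq_single x]
  · rw [Finset.sum_eq_single x]
    · simp only [Prod.mk.injEq, eqz_eq_one]; split <;> simp_all
    · intro b _ hb
      simp only [Prod.mk.injEq, eqz_eq_one]; split <;> simp_all
    · simp
  · intro b _ hb
    refine Finset.sum_eq_zero fun y _ => ?_
    simp only [Prod.mk.injEq, eqz_eq_one]; split <;> simp_all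
  · simp

lemma rV_one (y : A) : rV c (y, 1) = c y y := by
  unfold rV
  rw [Finset.sum_eq_single y]
  · rw [Finset.sum_eq_single y]
    · simp only [Prod.mk.injEq, eqz_eq_one]; split <;> simp_all
    · intro b _ hb
      simp only [Prod.mk.injEq, eqz_eq_one]
      split
      · next h => exact absurd h.1 hb
      · rfl
    · simp
  · intro b _ hb
    refine Finset.sum_eq_zero fun y' _ => ?_
    simp only [Prod.mk.injEq, eqz_eq_one]
    split
    · next h => exact absurd (h.2.trans h.1) hb
    · rfl
  · simp

lemma rU_zero (x : A) : rU c (x, 0) = ∑ y, if x = y then 0 else c x y := by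
  unfold rU
  rw [Finset.sum_eq_single x]
  · refine Finset.sum_congr rfl fun y _ => ?_
    simp only [Prod.mk.injEq, eqz_eq_zero]
    by_cases h : x = y <;> simp_all
  · intro b _ hb
    refine Finset.sum_eq_zero fun y _ => ?_
    simp only [Prod.mk.injEq, eqz_eq_zero]; split <;> simp_all
  · simp

lemma rV_zero (y : A) : rV c (y, 0) = ∑ x, if x = y then 0 else c x y := by
  unfold rV
  rw [Finset.sum_comm]
  rw [Finset.sum_eq_single y]
  · refine Finset.sum_congr rfl fun x _ => ?_
    simp only [Prod.mk.injEq, eqz_eq_zero]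
    by_cases h : x = y <;> simp_all
  · intro b _ hb
    refine Finset.sum_eq_zero fun x _ => ?_
    simp only [Prod.mk.injEq, eqz_eq_zero]; split <;> simp_all
  · simp

lemma rW_oneone (x y : A) : rW c ((x,1),(y,1)) = if x = y then c x x else 0 := by
  unfold rW
  rw [Finset.sum_eq_single x]
  · rw [Finset.sum_eq_single x]
    · simp only [Prod.mk.injEq, eqz_eq_one]
      by_cases h : x = y <;> simp_all
    · intro b _ hb
      simp only [Prod.mk.injEq, eqz_eq_one]; split <;> simp_all
    · simp
  · intro b _ hb
    refine Finset.sum_eq_zero fun y' _ => ?_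
    simp only [Prod.mk.injEq, eqz_eq_one]; split <;> simp_all
  · simp

lemma rW_zerozero (x y : A) : rW c ((x,0),(y,0)) = if x = y then 0 else c x y := by
  unfold rW
  rw [Finset.sum_eq_single x]
  · rw [Finset.sum_eq_single y]
    · simp only [Prod.mk.injEq, eqz_eq_zero]
      by_cases h : x = y <;> simp_all
    · intro b _ hb
      simp only [Prod.mk.injEq, eqz_eq_zero]; split <;> simp_all
    · simp
  · intro b _ hb
    refine Finset.sum_eq_zero fun y' _ => ?_
    simp only [Prod.mk.injEq, eqz_eq_zero]; split <;> simp_all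
  · simp

lemma rW_onezero (x y : A) : rW c ((x,1),(y,0)) = 0 := by
  unfold rW
  refine Finset.sum_eq_zero fun a _ => Finset.sum_eq_zero fun b _ => ?_
  simp only [Prod.mk.injEq, eqz_eq_one, eqz_eq_zero]
  split
  · next h => exact absurd h.1.2 h.2.2
  · rfl

lemma rW_zeroone (x y : A) : rW c ((x,0),(y,1)) = 0 := by
  unfold rW
  refine Finset.sum_eq_zero fun a _ => Finset.sum_eq_zero fun b _ => ?_
  simp only [Prod.mk.injEq, eqz_eq_one, eqz_eq_zero]
  split
  · next h => exact absurd h.2.2 h.1.2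
  · rfl

lemma all_zero (c : A → A → ℝ) (hc : ∀ x y, 0 ≤ c x y) (hw : wM c = 0) : ∀ x y, c x y = 0 := by
  intro x y
  have h1 := (Finset.sum_eq_zero_iff_of_nonneg (fun x _ =>
    Finset.sum_nonneg fun y _ => hc x y)).mp hw x (Finset.mem_univ x)
  exact (Finset.sum_eq_zero_iff_of_nonneg (fun y _ => hc x y)).mp h1 y (Finset.mem_univ y)

lemma rU_of_zero (c : A → A → ℝ) (hz : ∀ x y, c x y = 0) (u) : rU c u = 0 := by
  unfold rU; simp [hz]
lemma rV_of_zero (c : A → A → ℝ) (hz : ∀ x y, c x y = 0) (v) : rV c v = 0 := by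
  unfold rV; simp [hz]
lemma rW_of_zero (c : A → A → ℝ) (hz : ∀ x y, c x y = 0) (uv) : rW c uv = 0 := by
  unfold rW; simp [hz]
lemma wM_of_zero (c : A → A → ℝ) (hz : ∀ x y, c x y = 0) : wM c = 0 := by
  unfold wM; simp [hz]
lemma wM_nonneg (c : A → A → ℝ) (hc : ∀ x y, 0 ≤ c x y) : 0 ≤ wM c :=
  Finset.sum_nonneg fun x _ => Finset.sum_nonneg fun y _ => hc x y

noncomputable def Tq (c : A → A → ℝ) : ℝ :=
  (∑ u, Real.negMulLog (rU c u)) + (∑ v, Real.negMulLog (rV c v))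
    - (∑ uv, Real.negMulLog (rW c uv)) - Real.negMulLog (wM c)

lemma Tq_key (c : A → A → ℝ) (hc : ∀ x y, 0 ≤ c x y) :
    0 ≤ Tq c ∧ (Tq c = 0 → ∀ uv, wM c * rW c uv = rU c uv.1 * rV c uv.2) := by
  rcases eq_or_lt_of_le (wM_nonneg c hc) with hw | hn
  · have hz := all_zero c hc hw.symm
    have hT : Tq c = 0 := by
      unfold Tq
      simp [rU_of_zero c hz, rV_of_zero c hz, rW_of_zero c hz, wM_of_zero c hz]
    refine ⟨hT.ge, fun _ uv => ?_⟩
    rw [rW_of_zero c hz, rU_of_zero c hz, rV_of_zero c hz]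
    ring
  · set n := wM c with hndef
    set r := rW c with hrdef
    set r1 := rU c with hr1def
    set r2 := rV c with hr2def
    set s : (A × Fin 2) × (A × Fin 2) → ℝ := fun uv => r1 uv.1 * r2 uv.2 / n with hsdef
    have hr : ∀ uv, 0 ≤ r uv := rW_nonneg c hc
    have h1n : ∀ u, 0 ≤ r1 u := rU_nonneg c hc
    have h2n : ∀ v, 0 ≤ r2 v := rV_nonneg c hc
    have hrle1 : ∀ uv : (A × Fin 2) × (A × Fin 2), r uv ≤ r1 uv.1 := by
      rintro ⟨u, v⟩
      rw [hr1def, ← sum_rW_left c u]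
      exact Finset.single_le_sum (fun v' (_ : v' ∈ univ) => hr (u, v')) (Finset.mem_univ v)
    have hrle2 : ∀ uv : (A × Fin 2) × (A × Fin 2), r uv ≤ r2 uv.2 := by
      rintro ⟨u, v⟩
      rw [hr2def, ← sum_rW_right c v]
      exact Finset.single_le_sum (fun u' (_ : u' ∈ univ) => hr (u', v)) (Finset.mem_univ u)
    have hs : ∀ uv, 0 ≤ s uv := fun uv => by
      rw [hsdef]
      exact div_nonneg (mul_nonneg (h1n _) (h2n _)) hn.le
    have hrpos : ∀ uv, r uv ≠ 0 → 0 < r uv := fun uv h => lt_of_le_of_ne (hr uv) (Ne.symm h)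
    have hdom : ∀ uv, r uv ≠ 0 → s uv ≠ 0 := by
      intro uv h
      have h0 := hrpos uv h
      have hp1 : 0 < r1 uv.1 := lt_of_lt_of_le h0 (hrle1 uv)
      have hp2 : 0 < r2 uv.2 := lt_of_lt_of_le h0 (hrle2 uv)
      rw [hsdef]
      positivity
    have hsum_r : ∑ uv, r uv = n := sum_rW c
    have hsum_s : ∑ uv, s uv = n := by
      rw [hsdef]
      have : ∀ u : A × Fin 2, ∑ v : A × Fin 2, r1 u * r2 v / n = r1 u * n / n := by
        intro u
        rw [← Finset.sum_div, ← Finset.mul_sum, sum_rV' c]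
      rw [Fintype.sum_prod_type]
      rw [Finset.sum_congr rfl fun u _ => this u]
      have : ∀ u : A × Fin 2, r1 u * n / n = r1 u := fun u => by
        field_simp
      rw [Finset.sum_congr rfl fun u _ => this u, sum_rU c]
    have hlog : ∑ uv, r uv * Real.log (s uv)
        = (∑ u, r1 u * Real.log (r1 u)) + (∑ v, r2 v * Real.log (r2 v)) - n * Real.log n := by
      have point : ∀ uv, r uv * Real.log (s uv)
          = r uv * Real.log (r1 uv.1) + r uv * Real.log (r2 uv.2) - r uv * Real.log n := by
        intro uv
        rcases eq_or_ne (r uv) 0 with h | h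
        · simp [h]
        · have h0 := hrpos uv h
          have hp1 : 0 < r1 uv.1 := lt_of_lt_of_le h0 (hrle1 uv)
          have hp2 : 0 < r2 uv.2 := lt_of_lt_of_le h0 (hrle2 uv)
          rw [hsdef]
          rw [Real.log_div (by positivity) hn.ne', Real.log_mul hp1.ne' hp2.ne']
          ring
      rw [Finset.sum_congr rfl fun uv _ => point uv]
      rw [Finset.sum_sub_distrib, Finset.sum_add_distrib]
      congr 1
      · congr 1
        · rw [Fintype.sum_prod_type]
          refine Finset.sum_congr rfl fun u _ => ?_
          dsimp only
          rw [← Finset.sum_mul, sum_rW_left c u]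
        · rw [Fintype.sum_prod_type, Finset.sum_comm]
          refine Finset.sum_congr rfl fun v _ => ?_
          dsimp only
          rw [← Finset.sum_mul, sum_rW_right c v]
      · rw [← Finset.sum_mul, hsum_r]
    have hTq : Tq c = (∑ uv, r uv * Real.log (r uv)) + n * Real.log n
        - (∑ u, r1 u * Real.log (r1 u)) - (∑ v, r2 v * Real.log (r2 v)) := by
      unfold Tq
      simp only [Real.negMulLog, neg_mul, Finset.sum_neg_distrib, ← hndef, ← hrdef, ← hr1def, ← hr2def]
      ring
    have hG := gibbs_sum r s hr hs hdom
    rw [Finset.sum_sub_distrib, hlog, hsum_s, hsum_r] at hG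
    constructor
    · rw [hTq]; linarith
    · intro hT0
      have heq : ∑ uv, (r uv * Real.log (s uv) - r uv * Real.log (r uv))
          = ∑ uv, s uv - ∑ uv, r uv := by
        rw [Finset.sum_sub_distrib, hlog, hsum_s, hsum_r]
        rw [hTq] at hT0
        linarith
      have hrs := gibbs_sum_eq r s hr hs hdom heq
      intro uv
      have := hrs uv
      rw [hsdef] at this
      field_simp at this
      linarith [this]

lemma rW_ne_zero {A : Type*} [Fintype A] [DecidableEq A] (c : A → A → ℝ) (uv)
    (h : rW c uv ≠ 0) :
    ∃ x y, c x y ≠ 0 ∧ ((x, eqz x y), (y, eqz x y)) = uv := by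
  unfold rW at h
  rcases Finset.exists_ne_zero_of_sum_ne_zero h with ⟨x, _, hx⟩
  rcases Finset.exists_ne_zero_of_sum_ne_zero hx with ⟨y, _, hy⟩
  by_cases hcond : ((x, eqz x y), (y, eqz x y)) = uv
  · rw [if_pos hcond] at hy
    exact ⟨x, y, hy, hcond⟩
  · rw [if_neg hcond] at hy
    exact absurd rfl hy


noncomputable def offd (c : A → A → ℝ) : ℝ := ∑ x, ∑ y, if x = y then 0 else c x y
noncomputable def diag (c : A → A → ℝ) : ℝ := ∑ x, c x x

lemma diag_add_offd (c : A → A → ℝ) : diag c + offd c = wM c := by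
  unfold diag offd wM
  rw [← Finset.sum_add_distrib]
  refine Finset.sum_congr rfl fun x _ => ?_
  have hpt : ∀ y, c x y = (if x = y then c x y else 0) + (if x = y then 0 else c x y) :=
    fun y => by split <;> simp
  rw [Finset.sum_congr rfl fun y _ => hpt y, Finset.sum_add_distrib]
  congr 1
  simp

lemma sum_rU_zero (c : A → A → ℝ) : ∑ x, rU c (x, 0) = offd c := by
  unfold offd
  exact Finset.sum_congr rfl fun x _ => rU_zero c x

lemma sum_rV_zero (c : A → A → ℝ) : ∑ y, rV c (y, 0) = offd c := by
  unfold offd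
  rw [Finset.sum_comm]
  exact Finset.sum_congr rfl fun y _ => rV_zero c y

lemma offd_nonneg (c : A → A → ℝ) (hc : ∀ x y, 0 ≤ c x y) : 0 ≤ offd c :=
  Finset.sum_nonneg fun x _ => Finset.sum_nonneg fun y _ => by
    split <;> [exact le_refl 0; exact hc x y]

lemma perq_bound (c : A → A → ℝ) (hc : ∀ x y, 0 ≤ c x y) (hA : Fintype.card A = 3)
    (hfact : ∀ uv, wM c * rW c uv = rU c uv.1 * rV c uv.2) :
    (∑ uv, Real.negMulLog (rW c uv)) - Real.negMulLog (wM c) ≤ offd c * Real.log 2 := by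
  classical
  rcases eq_or_lt_of_le (wM_nonneg c hc) with hw | hn
  · have hz := all_zero c hc hw.symm
    have h1 : offd c = 0 := by
      unfold offd; simp [hz]
    rw [h1, wM_of_zero c hz]
    simp [rW_of_zero c hz]
  · -- diag * offd = 0
    have h1 : ∀ x y, c x x * rV c (y, 0) = 0 := by
      intro x y
      have h := hfact ((x,1),(y,0))
      rw [rW_onezero, rU_one] at h
      simpa using h.symm
    have hαβ : diag c * offd c = 0 := by
      rw [← sum_rV_zero]
      unfold diag
      rw [Finset.sum_mul]
      refine Finset.sum_eq_zero fun x _ => ?_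
      rw [Finset.mul_sum]
      exact Finset.sum_eq_zero fun y _ => h1 x y
    have hlog2 : Real.log ((2:ℕ) : ℝ) = Real.log 2 := by norm_num
    have hlog1 : Real.log ((1:ℕ) : ℝ) = 0 := by norm_num
    rcases mul_eq_zero.mp hαβ with hα | hβ
    · -- diag = 0 case
      have hdiag : ∀ x, c x x = 0 := fun x =>
        (Finset.sum_eq_zero_iff_of_nonneg (fun x _ => hc x x)).mp hα x (Finset.mem_univ x)
      have hwoff : offd c = wM c := by
        have := diag_add_offd c; rw [hα] at this; linarith
      set f : A → ℝ := fun x => rU c (x, 0) with hf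
      set g : A → ℝ := fun y => rV c (y, 0) with hg
      have hfg : ∀ x, f x * g x = 0 := by
        intro x
        have h := hfact ((x,0),(x,0))
        rw [rW_zerozero] at h
        simpa using h.symm
      have hcfg : ∀ x y, c x y ≠ 0 → (x ≠ y ∧ f x ≠ 0 ∧ g y ≠ 0) := by
        intro x y hcxy
        have hxy : x ≠ y := by
          intro h; exact hcxy (h ▸ hdiag x)
        refine ⟨hxy, ?_, ?_⟩
        · have hle : c x y ≤ f x := by
            rw [hf]; dsimp only
            rw [rU_zero]
            have : c x y = if x = y then 0 else c x y := by rw [if_neg hxy]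
            rw [this]
            exact Finset.single_le_sum (f := fun y' => if x = y' then 0 else c x y')
              (fun y' _ => by split <;> [exact le_refl 0; exact hc x y']) (Finset.mem_univ y)
          have : 0 < c x y := lt_of_le_of_ne (hc x y) (Ne.symm hcxy)
          linarith [lt_of_lt_of_le this hle]
        · have hle : c x y ≤ g y := by
            rw [hg]; dsimp only
            rw [rV_zero]
            have : c x y = if x = y then 0 else c x y := by rw [if_neg hxy]
            rw [this]
            exact Finset.single_le_sum (f := fun x' => if x' = y then 0 else c x' y)
              (fun x' _ => by split <;> [exact le_refl 0; exact hc x' y]) (Finset.mem_univ x)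
          have : 0 < c x y := lt_of_le_of_ne (hc x y) (Ne.symm hcxy)
          linarith [lt_of_lt_of_le this hle]
      set Sf := Finset.univ.filter (fun x => f x ≠ 0) with hSf
      set Sg := Finset.univ.filter (fun y => g y ≠ 0) with hSg
      have hdisj : Disjoint Sf Sg := by
        rw [Finset.disjoint_left]
        intro x hx hx'
        rw [hSf, Finset.mem_filter] at hx
        rw [hSg, Finset.mem_filter] at hx'
        exact (mul_ne_zero hx.2 hx'.2) (hfg x)
      have hcards : Sf.card + Sg.card ≤ 3 := by
        rw [← Finset.card_union_of_disjoint hdisj]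
        calc (Sf ∪ Sg).card ≤ Finset.univ.card := Finset.card_le_card (Finset.subset_univ _)
        _ = 3 := by rw [Finset.card_univ, hA]
      have hSfne : 1 ≤ Sf.card := by
        have hsum : ∑ x, f x = offd c := sum_rU_zero c
        have : ∑ x, f x ≠ 0 := by rw [hsum, hwoff]; exact hn.ne'
        rcases Finset.exists_ne_zero_of_sum_ne_zero this with ⟨x, _, hx⟩
        exact Finset.card_pos.mpr ⟨x, by rw [hSf]; simp [hx]⟩
      have hSgne : 1 ≤ Sg.card := by
        have hsum : ∑ y, g y = offd c := sum_rV_zero c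
        have : ∑ y, g y ≠ 0 := by rw [hsum, hwoff]; exact hn.ne'
        rcases Finset.exists_ne_zero_of_sum_ne_zero this with ⟨y, _, hy⟩
        exact Finset.card_pos.mpr ⟨y, by rw [hSg]; simp [hy]⟩
      have hprod : Sf.card * Sg.card ≤ 2 := by
        have h2 : Sf.card = 1 ∨ Sg.card = 1 := by omega
        rcases h2 with h2 | h2 <;> rw [h2] <;> omega
      -- support of rW injects into Sf ×ˢ Sg
      have hcard : (Finset.univ.filter (fun uv => rW c uv ≠ 0)).card ≤ 2 := by
        have hmaps : ∀ uv ∈ Finset.univ.filter (fun uv => rW c uv ≠ 0),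
            (uv.1.1, uv.2.1) ∈ Sf ×ˢ Sg ∧
            uv = ((uv.1.1, (0:Fin 2)), (uv.2.1, (0:Fin 2))) := by
          intro uv huv
          rw [Finset.mem_filter] at huv
          rcases rW_ne_zero c uv huv.2 with ⟨x, y, hcxy, hequv⟩
          rcases hcfg x y hcxy with ⟨hxy, hfx, hgy⟩
          have hez : eqz x y = 0 := eqz_eq_zero.mpr hxy
          rw [hez] at hequv
          constructor
          · rw [← hequv]
            simp only [Finset.mem_product]
            constructor
            · rw [hSf]; simpa using hfx
            · rw [hSg]; simpa using hgy
          · rw [← hequv]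
        calc (Finset.univ.filter (fun uv => rW c uv ≠ 0)).card
            ≤ (Sf ×ˢ Sg).card := by
              apply Finset.card_le_card_of_injOn (fun uv => (uv.1.1, uv.2.1))
              · intro uv huv; exact (hmaps uv huv).1
              · intro uv huv uv' huv' heq
                simp only at heq
                have h1 := (hmaps uv (by simpa using huv)).2
                have h2 := (hmaps uv' (by simpa using huv')).2
                have e1 : uv.1.1 = uv'.1.1 := by rw [Prod.ext_iff] at heq; exact heq.1
                have e2 : uv.2.1 = uv'.2.1 := by rw [Prod.ext_iff] at heq; exact heq.2

                rw [h1, h2, e1, e2]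
        _ = Sf.card * Sg.card := Finset.card_product Sf Sg
        _ ≤ 2 := hprod
      have := entropy_le_mass_mul_log (rW c) (rW_nonneg c hc) 2 hcard
      rw [sum_rW, hlog2] at this
      rw [hwoff]
      exact this
    · -- offd = 0 case
      have hoff : ∀ x y, x ≠ y → c x y = 0 := by
        intro x y hxy
        have h1 := (Finset.sum_eq_zero_iff_of_nonneg (fun x _ =>
          Finset.sum_nonneg fun y _ => by
            split <;> [exact le_refl 0; exact hc x y])).mp hβ x (Finset.mem_univ x)
        have h2 := (Finset.sum_eq_zero_iff_of_nonneg (fun y _ => by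
          split <;> [exact le_refl 0; exact hc x y])).mp h1 y (Finset.mem_univ y)
        rwa [if_neg hxy] at h2
      rw [hβ, zero_mul]
      have hcard : (Finset.univ.filter (fun uv => rW c uv ≠ 0)).card ≤ 1 := by
        rw [Finset.card_le_one]
        have hchar : ∀ uv ∈ Finset.univ.filter (fun uv => rW c uv ≠ 0),
            ∃ x, c x x ≠ 0 ∧ uv = ((x, (1:Fin 2)), (x, (1:Fin 2))) := by
          intro uv huv
          rw [Finset.mem_filter] at huv
          rcases rW_ne_zero c uv huv.2 with ⟨x, y, hcxy, hequv⟩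
          have hxy : x = y := by
            by_contra h
            exact hcxy (hoff x y h)
          subst hxy
          have hez : eqz x x = 1 := eqz_eq_one.mpr rfl
          rw [hez] at hequv
          exact ⟨x, hcxy, hequv.symm⟩
        intro uv huv uv' huv'
        rcases hchar uv huv with ⟨x, hx, hx'⟩
        rcases hchar uv' huv' with ⟨x', hx2, hx2'⟩
        have hxx : x = x' := by
          by_contra h
          have hfa := hfact ((x,1),(x',1))
          rw [rW_oneone, if_neg h, rU_one, rV_one] at hfa
          simp only [mul_zero] at hfa
          exact (mul_ne_zero hx hx2) hfa.symm
        rw [hx', hx2', hxx]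
      have := entropy_le_mass_mul_log (rW c) (rW_nonneg c hc) 1 hcard
      rw [sum_rW, hlog1, mul_zero] at this
      exact this

theorem key_bound {A T : Type*} [Fintype A] [DecidableEq A] [Fintype T]
    (hA : Fintype.card A = 3) (c : T → A → A → ℝ) (hc : ∀ q x y, 0 ≤ c q x y)
    (hmarg : ∀ x y, ∑ q, c q x y = 1/9)
    (hCMI : ∑ q, Tq (c q) = 0) :
    ∑ q, ((∑ uv, Real.negMulLog (rW (c q) uv)) - Real.negMulLog (wM (c q)))
      ≤ (2/3) * Real.log 2 := by
  have hT0 : ∀ q, Tq (c q) = 0 := fun q =>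
    (Finset.sum_eq_zero_iff_of_nonneg (fun q _ => (Tq_key (c q) (hc q)).1)).mp hCMI q
      (Finset.mem_univ q)
  have hb : ∀ q, (∑ uv, Real.negMulLog (rW (c q) uv)) - Real.negMulLog (wM (c q))
      ≤ offd (c q) * Real.log 2 := fun q =>
    perq_bound (c q) (hc q) hA ((Tq_key (c q) (hc q)).2 (hT0 q))
  have hoffd_total : ∑ q, offd (c q) = 2/3 := by
    unfold offd
    rw [Finset.sum_comm]
    have hinner : ∀ x : A, ∑ y : A, ∑ q, (if x = y then 0 else c q x y) = 2/9 := by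
      intro x
      have h1 : ∀ y : A, ∑ q, (if x = y then 0 else c q x y)
          = if x = y then 0 else (1/9 : ℝ) := by
        intro y
        split
        · simp
        · exact hmarg x y
      rw [Finset.sum_congr rfl fun y _ => h1 y]
      have h2 : ∀ y : A, (if x = y then (0:ℝ) else 1/9)
          = 1/9 - (if x = y then 1/9 else 0) := fun y => by split <;> ring
      rw [Finset.sum_congr rfl fun y _ => h2 y, Finset.sum_sub_distrib,
        Finset.sum_const, Finset.sum_ite_eq]
      simp [Finset.card_univ, hA]
      norm_num
    have hswap : ∀ x : A, ∑ y : A, ∑ q, (if x = y then 0 else c q x y)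
        = ∑ q, ∑ y : A, (if x = y then 0 else c q x y) := fun x => Finset.sum_comm
    calc ∑ x : A, ∑ q, ∑ y : A, (if x = y then 0 else c q x y)
        = ∑ x : A, ∑ y : A, ∑ q, (if x = y then 0 else c q x y) := by
          exact Finset.sum_congr rfl fun x _ => (hswap x).symm
    _ = ∑ x : A, (2/9 : ℝ) := Finset.sum_congr rfl fun x _ => hinner x
    _ = 2/3 := by simp [Finset.card_univ, hA]; norm_num
  calc ∑ q, ((∑ uv, Real.negMulLog (rW (c q) uv)) - Real.negMulLog (wM (c q)))
      ≤ ∑ q, offd (c q) * Real.log 2 := Finset.sum_le_sum fun q _ => hb q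
  _ = (∑ q, offd (c q)) * Real.log 2 := (Finset.sum_mul _ _ _).symm
  _ = (2/3) * Real.log 2 := by rw [hoffd_total]

lemma pm_nonneg {Ω S : Type*} [MeasurableSpace Ω] (μ : Measure Ω) (X : Ω → S) (x : S) :
    0 ≤ pm μ X x := ENNReal.toReal_nonneg

lemma pm_comp {Ω α β : Type*} [MeasurableSpace Ω] (μ : Measure Ω) [IsFiniteMeasure μ]
    [Fintype α] [MeasurableSpace α] [MeasurableSingletonClass α] [DecidableEq β]
    {W : Ω → α} (hW : Measurable W) (f : α → β) (b : β) :
    pm μ (fun ω => f (W ω)) b = ∑ a, if f a = b then pm μ W a else 0 := by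
  classical
  have hset : (fun ω => f (W ω)) ⁻¹' {b}
      = ⋃ a ∈ (Finset.univ.filter fun a => f a = b), W ⁻¹' {a} := by
    ext ω
    simp only [Set.mem_preimage, Set.mem_singleton_iff, Set.mem_iUnion, Finset.mem_filter,
      Finset.mem_univ, true_and, exists_prop]
    constructor
    · intro h; exact ⟨W ω, h, rfl⟩
    · rintro ⟨a, h1, h2⟩; rw [h2]; exact h1
  unfold pm
  rw [hset, measure_biUnion_finset]
  · rw [ENNReal.toReal_sum (fun a _ => measure_ne_top μ _), Finset.sum_filter]
  · intro a _ a' _ hne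
    refine Set.disjoint_left.mpr fun ω h1 h2 => hne ?_
    simp only [Set.mem_preimage, Set.mem_singleton_iff] at h1 h2
    rw [← h1, ← h2]
  · exact fun a _ => hW (measurableSet_singleton a)

lemma entH_comp {Ω α β : Type*} [MeasurableSpace Ω] (μ : Measure Ω) [IsFiniteMeasure μ]
    [Fintype α] [MeasurableSpace α] [MeasurableSingletonClass α] [Fintype β] [DecidableEq β]
    {W : Ω → α} (hW : Measurable W) (f : α → β) :
    entH μ (fun ω => f (W ω)) = ∑ b, Real.negMulLog (∑ a, if f a = b then pm μ W a else 0) := by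
  unfold entH
  exact Finset.sum_congr rfl fun b _ => by rw [pm_comp μ hW f b]


end TernaryEQHelper

open TernaryEQHelper

/-- Ternary EQ: for independent uniform ternary `X, Y`, `Z = 1_{X=Y}`, `U = (X,Z)`,
`V = (Y,Z)`, any finite-valued `Q` with `I(U ; V | Q) = 0` satisfies
`H(U|Q) + H(V|Q) ≤ (2/3) log 2`. -/
theorem ternary_EQ_wyner_upper_bound
    {Ω : Type*} [MeasurableSpace Ω] (μ : Measure Ω) [IsProbabilityMeasure μ]
    {A : Type*} [Fintype A] [DecidableEq A]
    [MeasurableSpace A] [MeasurableSingletonClass A] (hA : Fintype.card A = 3)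
    (X Y : Ω → A) (hX : Measurable X) (hY : Measurable Y)
    (hindep : IndepFun X Y μ)
    (hXunif : ∀ a : A, μ (X ⁻¹' {a}) = (3 : ℝ≥0∞)⁻¹)
    (hYunif : ∀ a : A, μ (Y ⁻¹' {a}) = (3 : ℝ≥0∞)⁻¹)
    (Z : Ω → Fin 2) (hZ : Z = fun ω => if X ω = Y ω then 1 else 0)
    {T : Type*} [Fintype T] [MeasurableSpace T] [MeasurableSingletonClass T]
    (Q : Ω → T) (hQ : Measurable Q)
    (hQci : condMutInf μ (fun ω => (X ω, Z ω)) (fun ω => (Y ω, Z ω)) Q = 0) :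
    condEnt μ (fun ω => (X ω, Z ω)) Q + condEnt μ (fun ω => (Y ω, Z ω)) Q
      ≤ (2 / 3) * Real.log 2 := by
  classical
  subst hZ
  set W : Ω → A × A × T := fun ω => (X ω, Y ω, Q ω) with hWdef
  have hW : Measurable W := hX.prodMk (hY.prodMk hQ)
  set c : T → A → A → ℝ := fun q x y => pm μ W (x, y, q) with hcdef
  have hc : ∀ q x y, 0 ≤ c q x y := fun q x y => pm_nonneg μ W _
  -- bridging entropies
  have hE1 : entH μ (fun ω => ((X ω, if X ω = Y ω then (1:Fin 2) else 0), Q ω))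
      = ∑ q, ∑ u : A × Fin 2, Real.negMulLog (rU (c q) u) := by
    have h := entH_comp μ hW (fun a : A × A × T => ((a.1, eqz a.1 a.2.1), a.2.2))
    refine h.trans ?_
    rw [Fintype.sum_prod_type, Finset.sum_comm]
    refine Finset.sum_congr rfl fun q _ => Finset.sum_congr rfl fun u _ => ?_
    congr 1
    rw [Fintype.sum_prod_type]
    unfold rU
    refine Finset.sum_congr rfl fun x _ => ?_
    rw [Fintype.sum_prod_type]
    refine Finset.sum_congr rfl fun y _ => ?_
    simp only [Prod.mk.injEq]
    by_cases hP : (x, eqz x y) = u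
    · simp [hP, Finset.sum_ite_eq', hcdef]
    · rw [if_neg hP]
      refine Finset.sum_eq_zero fun q' _ => ?_
      rw [if_neg (by tauto)]
  have hE2 : entH μ (fun ω => ((Y ω, if X ω = Y ω then (1:Fin 2) else 0), Q ω))
      = ∑ q, ∑ v : A × Fin 2, Real.negMulLog (rV (c q) v) := by
    have h := entH_comp μ hW (fun a : A × A × T => ((a.2.1, eqz a.1 a.2.1), a.2.2))
    refine h.trans ?_
    rw [Fintype.sum_prod_type, Finset.sum_comm]
    refine Finset.sum_congr rfl fun q _ => Finset.sum_congr rfl fun v _ => ?_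
    congr 1
    rw [Fintype.sum_prod_type]
    unfold rV
    refine Finset.sum_congr rfl fun x _ => ?_
    rw [Fintype.sum_prod_type]
    refine Finset.sum_congr rfl fun y _ => ?_
    simp only [Prod.mk.injEq]
    by_cases hP : (y, eqz x y) = v
    · simp [hP, Finset.sum_ite_eq', hcdef]
    · rw [if_neg hP]
      refine Finset.sum_eq_zero fun q' _ => ?_
      rw [if_neg (by tauto)]
  have hE3 : entH μ (fun ω => (((X ω, if X ω = Y ω then (1:Fin 2) else 0),
        (Y ω, if X ω = Y ω then (1:Fin 2) else 0)), Q ω))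
      = ∑ q, ∑ uv : (A × Fin 2) × (A × Fin 2), Real.negMulLog (rW (c q) uv) := by
    have h := entH_comp μ hW
      (fun a : A × A × T => (((a.1, eqz a.1 a.2.1), (a.2.1, eqz a.1 a.2.1)), a.2.2))
    refine h.trans ?_
    rw [Fintype.sum_prod_type, Finset.sum_comm]
    refine Finset.sum_congr rfl fun q _ => Finset.sum_congr rfl fun uv _ => ?_
    congr 1
    rw [Fintype.sum_prod_type]
    unfold rW
    refine Finset.sum_congr rfl fun x _ => ?_
    rw [Fintype.sum_prod_type]
    refine Finset.sum_congr rfl fun y _ => ?_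
    simp only [Prod.mk.injEq]
    by_cases hP : ((x, eqz x y), (y, eqz x y)) = uv
    · simp [hP, Finset.sum_ite_eq', hcdef]
    · rw [if_neg hP]
      refine Finset.sum_eq_zero fun q' _ => ?_
      rw [if_neg (by tauto)]
  have hE4 : entH μ Q = ∑ q, Real.negMulLog (wM (c q)) := by
    have h := entH_comp μ hW (fun a : A × A × T => a.2.2)
    refine h.trans ?_
    refine Finset.sum_congr rfl fun q _ => ?_
    congr 1
    rw [Fintype.sum_prod_type]
    unfold wM
    refine Finset.sum_congr rfl fun x _ => ?_
    rw [Fintype.sum_prod_type]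
    refine Finset.sum_congr rfl fun y _ => ?_
    simp [Finset.sum_ite_eq', hcdef]
  have hmarg : ∀ x y, ∑ q, c q x y = 1/9 := by
    intro x y
    have h := pm_comp μ hW (fun a : A × A × T => (a.1, a.2.1)) (x, y)
    have hxy : pm μ (fun ω => (X ω, Y ω)) (x, y) = 1/9 := by
      have hpre : (fun ω => (X ω, Y ω)) ⁻¹' {(x, y)} = X ⁻¹' {x} ∩ Y ⁻¹' {y} := by
        ext ω; simp [Prod.ext_iff]
      unfold pm
      rw [hpre, hindep.measure_inter_preimage_eq_mul {x} {y} (measurableSet_singleton x)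
        (measurableSet_singleton y), hXunif, hYunif, ENNReal.toReal_mul]
      simp [ENNReal.toReal_inv]
      norm_num
    have h2 : ∑ a : A × A × T, (if (a.1, a.2.1) = (x, y) then pm μ W a else 0)
        = ∑ q, c q x y := by
      rw [Fintype.sum_prod_type]
      rw [Finset.sum_eq_single x]
      · rw [Fintype.sum_prod_type, Finset.sum_eq_single y]
        · refine Finset.sum_congr rfl fun q' _ => ?_
          simp [hcdef]
        · intro b _ hb
          refine Finset.sum_eq_zero fun q' _ => ?_
          rw [if_neg (by simp [Prod.ext_iff]; tauto)]
        · simp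
      · intro b _ hb
        refine Finset.sum_eq_zero fun yq _ => ?_
        rw [if_neg (by simp [Prod.ext_iff]; tauto)]
      · simp
    rw [← h2, ← h]
    exact hxy
  simp only [condMutInf] at hQci
  simp only [condEnt]
  rw [hE1, hE2, hE3, hE4] at hQci
  rw [hE1, hE2, hE4]
  have hCMIsum : ∑ q, Tq (c q) = 0 := by
    unfold Tq
    rw [Finset.sum_sub_distrib, Finset.sum_sub_distrib, Finset.sum_add_distrib]
    linarith [hQci]
  have hkey := key_bound hA c hc hmarg hCMIsum
  rw [Finset.sum_sub_distrib] at hkey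
  linarith [hQci, hkey]
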